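/- Let A ∈ ℝ^{V×W}, b ∈ ℝ^V, let (𝒫, 𝒬) be an equitable partition of A such that b is constant on each class of 𝒫, let C = Π_𝒫, D = Π_𝒬 be the partition matrices, and set A' = CˢAD, b' = Cˢb. If x ∈ ℝ^W satisfies Ax = b, then x' = Dˢx satisfies A'x' = b'. Conversely, if x' ∈ ℝ^𝒬 satisfies A'x' = b', then x = Dx' satisfies Ax = b. -/

import Mathlib

open Finset Matrix
open scoped Classical

/-- A partition matrix: a 0–1 matrix with exactly one 1 in each row and at least one 1 in
each column. -/
def PartitionMatrix {V T : Type*} [Fintype V] [Fintype T] (P : Matrix V T ℝ) : Prop :=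
  (∀ v t, P v t = 0 ∨ P v t = 1) ∧ (∀ v, ∃! t, P v t = 1) ∧ (∀ t, ∃ v, P v t = 1)

/-- The scaled transpose `Πˢ` of a partition matrix: `Πˢ t v = Π v t / ∑_{v'} Π v' t`. -/
noncomputable def scaledT {V T : Type*} [Fintype V] (P : Matrix V T ℝ) : Matrix T V ℝ :=
  Matrix.of fun t v => P v t / ∑ v', P v' t

section Aux
variable {V T : Type*} [Fintype V] [Fintype T] {P : Matrix V T ℝ}

lemma pm_sum_mul (hP : PartitionMatrix P) (t : T) (f : V → ℝ) :
    ∑ v, P v t * f v = ∑ v ∈ univ.filter (fun v => P v t = 1), f v := by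
  rw [Finset.sum_filter]
  refine Finset.sum_congr rfl fun v _ => ?_
  rcases hP.1 v t with h | h <;> simp [h]

lemma pm_colsum (hP : PartitionMatrix P) (t : T) :
    ∑ v, P v t = ((univ.filter (fun v => P v t = 1)).card : ℝ) := by
  have := pm_sum_mul hP t (fun _ => (1 : ℝ))
  simpa using this

lemma pm_card_pos (hP : PartitionMatrix P) (t : T) :
    0 < ((univ.filter (fun v => P v t = 1)).card : ℝ) := by
  obtain ⟨v, hv⟩ := hP.2.2 t
  exact_mod_cast Finset.card_pos.mpr ⟨v, by simp [hv]⟩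

lemma scaledT_mulVec (hP : PartitionMatrix P) (y : V → ℝ) (t : T) :
    (scaledT P *ᵥ y) t
      = (∑ v ∈ univ.filter (fun v => P v t = 1), y v)
          / ((univ.filter (fun v => P v t = 1)).card : ℝ) := by
  simp only [mulVec, dotProduct, scaledT, Matrix.of_apply]
  rw [← pm_sum_mul hP t y, ← pm_colsum hP t]
  rw [Finset.sum_div]
  exact Finset.sum_congr rfl fun v _ => div_mul_eq_mul_div _ _ _

end Aux

/-- **Reduction Lemma for linear equations.** Let `(𝒫, 𝒬)` be an equitable
partition of `A` with partition matrices `C, D`, such that `b` is constant on each class of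
`𝒫`. Set `A' = CˢAD`, `b' = Cˢb`. If `Ax = b` then `A'(Dˢx) = b'`; conversely if
`A'x' = b'` then `A(Dx') = b`. -/
theorem reduction_lemma_linear_equations
    {V W Pt Qt : Type*} [Fintype V] [Fintype W] [Fintype Pt] [Fintype Qt]
    (A : Matrix V W ℝ) (b : V → ℝ)
    (C : Matrix V Pt ℝ) (D : Matrix W Qt ℝ)
    (hC : PartitionMatrix C) (hD : PartitionMatrix D)
    (hrow : ∀ (p : Pt) (q : Qt) (v v' : V), C v p = 1 → C v' p = 1 →
      ∑ w ∈ univ.filter (fun w => D w q = 1), A v w =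
      ∑ w ∈ univ.filter (fun w => D w q = 1), A v' w)
    (hcol : ∀ (p : Pt) (q : Qt) (w w' : W), D w q = 1 → D w' q = 1 →
      ∑ v ∈ univ.filter (fun v => C v p = 1), A v w =
      ∑ v ∈ univ.filter (fun v => C v p = 1), A v w')
    (hb : ∀ (p : Pt) (v v' : V), C v p = 1 → C v' p = 1 → b v = b v') :
    (∀ x : W → ℝ, A *ᵥ x = b →
      (scaledT C * A * D) *ᵥ (scaledT D *ᵥ x) = scaledT C *ᵥ b) ∧
    (∀ x' : Qt → ℝ, (scaledT C * A * D) *ᵥ x' = scaledT C *ᵥ b →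
      A *ᵥ (D *ᵥ x') = b) := by
  -- general computation: (A *ᵥ (D *ᵥ z)) v = ∑ q, z q * (row sum of A over class q)
  have gval : ∀ (z : Qt → ℝ) (v : V),
      (A *ᵥ (D *ᵥ z)) v = ∑ q, z q * ∑ w ∈ univ.filter (fun w => D w q = 1), A v w := by
    intro z v
    simp only [mulVec, dotProduct, Finset.mul_sum]
    rw [Finset.sum_comm]
    refine Finset.sum_congr rfl fun q _ => ?_
    rw [← pm_sum_mul hD q (fun w => z q * A v w)]
    exact Finset.sum_congr rfl fun w _ => by ring
  -- qOf: the class of w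
  have qOf : ∀ w : W, ∃ q, D w q = 1 ∧ ∀ q', D w q' = 1 → q' = q := fun w => hD.2.1 w
  choose qf hqf hqf' using qOf
  have hfilterQ : ∀ q : Qt, univ.filter (fun w => D w q = 1) = univ.filter (fun w => qf w = q) := by
    intro q
    refine Finset.filter_congr fun w _ => ?_
    constructor
    · intro h; exact (hqf' w q h).symm
    · intro h; rw [← h]; exact hqf w
  -- representatives of Q-classes
  choose wrep hwrep using hD.2.2
  -- column sums constant on Q-classes
  constructor
  · intro x hx
    ext p
    rw [← Matrix.mulVec_mulVec, ← Matrix.mulVec_mulVec]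
    rw [scaledT_mulVec hC, scaledT_mulVec hC]
    congr 1
    calc ∑ v ∈ univ.filter (fun v => C v p = 1), (A *ᵥ (D *ᵥ (scaledT D *ᵥ x))) v
        = ∑ v ∈ univ.filter (fun v => C v p = 1), ∑ q,
            (scaledT D *ᵥ x) q * ∑ w ∈ univ.filter (fun w => D w q = 1), A v w := by
          exact Finset.sum_congr rfl fun v _ => gval _ v
      _ = ∑ q, (scaledT D *ᵥ x) q *
            ∑ v ∈ univ.filter (fun v => C v p = 1), ∑ w ∈ univ.filter (fun w => D w q = 1), A v w := by
          rw [Finset.sum_comm]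
          exact Finset.sum_congr rfl fun q _ => by rw [Finset.mul_sum]
      _ = ∑ q, (∑ w ∈ univ.filter (fun w => D w q = 1), x w) *
            ∑ v ∈ univ.filter (fun v => C v p = 1), A v (wrep q) := by
          refine Finset.sum_congr rfl fun q _ => ?_
          have hsc : (∑ v ∈ univ.filter (fun v => C v p = 1), ∑ w ∈ univ.filter (fun w => D w q = 1), A v w)
              = ∑ w ∈ univ.filter (fun w => D w q = 1), ∑ v ∈ univ.filter (fun v => C v p = 1), A v w :=
            Finset.sum_comm
          rw [scaledT_mulVec hD, hsc]
          have h1 : ∑ w ∈ univ.filter (fun w => D w q = 1),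
              ∑ v ∈ univ.filter (fun v => C v p = 1), A v w
              = ((univ.filter (fun w => D w q = 1)).card : ℝ) *
                ∑ v ∈ univ.filter (fun v => C v p = 1), A v (wrep q) := by
            rw [Finset.sum_congr rfl (fun w hw => hcol p q w (wrep q)
              (by simpa using (Finset.mem_filter.mp hw).2) (hwrep q)),
              Finset.sum_const, nsmul_eq_mul]
          rw [h1]
          have hc := pm_card_pos hD q
          field_simp
      _ = ∑ q, ∑ w ∈ univ.filter (fun w => D w q = 1),
            x w * ∑ v ∈ univ.filter (fun v => C v p = 1), A v w := by
          refine Finset.sum_congr rfl fun q _ => ?_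
          rw [Finset.sum_mul]
          refine Finset.sum_congr rfl fun w hw => ?_
          rw [hcol p q w (wrep q) (by simpa using (Finset.mem_filter.mp hw).2) (hwrep q)]
      _ = ∑ w, x w * ∑ v ∈ univ.filter (fun v => C v p = 1), A v w := by
          rw [Finset.sum_congr rfl fun q _ => by rw [hfilterQ q]]
          exact Finset.sum_fiberwise univ qf _
      _ = ∑ v ∈ univ.filter (fun v => C v p = 1), (A *ᵥ x) v := by
          simp only [mulVec, dotProduct, Finset.mul_sum]
          rw [Finset.sum_comm]
          exact Finset.sum_congr rfl fun w _ => Finset.sum_congr rfl fun v _ => by ring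
      _ = ∑ v ∈ univ.filter (fun v => C v p = 1), b v := by rw [hx]
  · intro x' hx'
    rw [← Matrix.mulVec_mulVec, ← Matrix.mulVec_mulVec] at hx'
    ext v
    obtain ⟨p, hvp, -⟩ := hC.2.1 v
    have key := congrFun hx' p
    rw [scaledT_mulVec hC, scaledT_mulVec hC] at key
    have hcpos := pm_card_pos hC p
    have hsum : ∑ v' ∈ univ.filter (fun v' => C v' p = 1), (A *ᵥ (D *ᵥ x')) v'
        = ∑ v' ∈ univ.filter (fun v' => C v' p = 1), b v' :=
      mul_right_cancel₀ (ne_of_gt hcpos)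
        (by rwa [div_eq_div_iff (ne_of_gt hcpos) (ne_of_gt hcpos)] at key)
    have hgconst : ∀ v' ∈ univ.filter (fun v' => C v' p = 1),
        (A *ᵥ (D *ᵥ x')) v' = (A *ᵥ (D *ᵥ x')) v := by
      intro v' hv'
      rw [gval, gval]
      exact Finset.sum_congr rfl fun q _ => by
        rw [hrow p q v' v (by simpa using (Finset.mem_filter.mp hv').2) hvp]
    have hbconst : ∀ v' ∈ univ.filter (fun v' => C v' p = 1), b v' = b v := by
      intro v' hv'
      exact hb p v' v (by simpa using (Finset.mem_filter.mp hv').2) hvp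
    rw [Finset.sum_congr rfl hgconst, Finset.sum_congr rfl hbconst,
      Finset.sum_const, Finset.sum_const, nsmul_eq_mul, nsmul_eq_mul] at hsum
    exact mul_left_cancel₀ (ne_of_gt hcpos) hsum
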